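/- Let U ⊆ A^{ℤ²} be an additive shift space and let Ω = {Ω(n)}_{n≥1} be an expanding system of finite subsets of ℤ². If limsup_{n→∞} |∂Ω(n)|/|Ω(n)| = 0, then h_Ω(U) ≤ h_r(U). -/

import Mathlib

open Filter
open scoped Classical

/-- The `m × n` rectangular lattice `Z_{m×n}(p)` with bottom-left corner `p`. -/
def Zrect (m n : ℕ) (p : ℤ × ℤ) : Finset (ℤ × ℤ) :=
  (Finset.range m ×ˢ Finset.range n).image (fun ab => (p.1 + (ab.1 : ℤ), p.2 + (ab.2 : ℤ)))

/-- The number of patterns of `U` seen on the finite window `L`. -/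
noncomputable def patternCount {A : Type*} (U : Set ((ℤ × ℤ) → A)) (L : Finset (ℤ × ℤ)) : ℕ :=
  Set.ncard ((fun x => fun p : L => x (p : ℤ × ℤ)) '' U)

/-- An additive shift space: nonempty, closed, translation invariant. -/
def IsShiftSpace {A : Type*} [TopologicalSpace A] (U : Set ((ℤ × ℤ) → A)) : Prop :=
  U.Nonempty ∧ IsClosed U ∧ ∀ v : ℤ × ℤ, ∀ x ∈ U, (fun p => x (p + v)) ∈ U

/-- An expanding system of finite sublattices of `ℤ²`. -/
def IsExpandingSystem (Ω : ℕ → Finset (ℤ × ℤ)) : Prop :=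
  (∀ n, Ω n ⊂ Ω (n + 1)) ∧ ∀ p : ℤ × ℤ, ∃ n, p ∈ Ω n

/-- The interior of a finite lattice. -/
def latInterior (L : Finset (ℤ × ℤ)) : Finset (ℤ × ℤ) :=
  L.filter (fun p => (p.1 + 1, p.2) ∈ L ∧ (p.1, p.2 + 1) ∈ L ∧ (p.1 + 1, p.2 + 1) ∈ L)

/-- The boundary of a finite lattice. -/
def latBoundary (L : Finset (ℤ × ℤ)) : Finset (ℤ × ℤ) := L \ latInterior L

/-- The rectangular entropy `h_r(U)`. -/
noncomputable def rectEntropy {A : Type*} (U : Set ((ℤ × ℤ) → A)) : ℝ :=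
  ⨅ mn : ℕ × ℕ, (1 / (((mn.1 + 1) * (mn.2 + 1) : ℕ) : ℝ)) *
    Real.log (patternCount U (Zrect (mn.1 + 1) (mn.2 + 1) (0, 0)))

/-- The entropy `h_Ω(U)` along an expanding system `Ω`. -/
noncomputable def entropyAlong {A : Type*} (U : Set ((ℤ × ℤ) → A)) (Ω : ℕ → Finset (ℤ × ℤ)) : ℝ :=
  Filter.limsup (fun n => (1 / ((Ω n).card : ℝ)) * Real.log (patternCount U (Ω n))) Filter.atTop

/-- `Ω_{k,l}(n)`: the union of grid rectangles `Z_{k×l}((ak,bl))` contained in `L`. -/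
noncomputable def gridPart (k l : ℕ) (L : Finset (ℤ × ℤ)) : Finset (ℤ × ℤ) :=
  L.filter (fun p => ∃ a b : ℤ,
    p ∈ Zrect k l ((k : ℤ) * a, (l : ℤ) * b) ∧ Zrect k l ((k : ℤ) * a, (l : ℤ) * b) ⊆ L)

/-- `β_{k,l}` : the size of the complement of the grid part. -/
noncomputable def betaKL (k l : ℕ) (L : Finset (ℤ × ℤ)) : ℕ := (L \ gridPart k l L).card

/-- `α_{k,l}` : the number of grid rectangles contained in `L`. -/
noncomputable def alphaKL (k l : ℕ) (L : Finset (ℤ × ℤ)) : ℕ :=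
  Set.ncard {ab : ℤ × ℤ | Zrect k l ((k : ℤ) * ab.1, (l : ℤ) * ab.2) ⊆ L}

/-- A tessellation of `ℤ²`. -/
def IsTessellation (T : Finset (ℤ × ℤ)) : Prop :=
  ∃ v : ℕ → ℤ × ℤ,
    (∀ i j : ℕ, i ≠ j → Disjoint (T.image (· + v i)) (T.image (· + v j))) ∧
    ∀ p : ℤ × ℤ, ∃ i : ℕ, p ∈ T.image (· + v i)

/-- Euclidean distance between points of `ℤ²`. -/
noncomputable def euclDist (p q : ℤ × ℤ) : ℝ :=
  Real.sqrt (((p.1 - q.1 : ℤ) : ℝ) ^ 2 + ((p.2 - q.2 : ℤ) : ℝ) ^ 2)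

/-- Block gluing with gap `M`. -/
def BlockGluingWithGap {A : Type*} (U : Set ((ℤ × ℤ) → A)) (M : ℕ) : Prop :=
  ∀ (m₁ n₁ m₂ n₂ : ℕ) (c₁ c₂ : ℤ × ℤ),
    (∀ p ∈ Zrect m₁ n₁ c₁, ∀ q ∈ Zrect m₂ n₂ c₂, (M : ℝ) ≤ euclDist p q) →
    ∀ x₁ ∈ U, ∀ x₂ ∈ U, ∃ x ∈ U,
      (∀ p ∈ Zrect m₁ n₁ c₁, x p = x₁ p) ∧ ∀ q ∈ Zrect m₂ n₂ c₂, x q = x₂ q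

/-- Block gluing. -/
def IsBlockGluing {A : Type*} (U : Set ((ℤ × ℤ) → A)) : Prop :=
  ∃ M : ℕ, 1 ≤ M ∧ BlockGluingWithGap U M

/-- A full shift on a sub-alphabet. -/
def IsFullShift {A : Type*} (U : Set ((ℤ × ℤ) → A)) : Prop :=
  ∃ B : Set A, U = {x | ∀ p : ℤ × ℤ, x p ∈ B}

/-- Shift of finite type. -/
def IsSFT {A : Type*} (U : Set ((ℤ × ℤ) → A)) : Prop :=
  ∃ (F : Finset (ℤ × ℤ)) (P : Set (F → A)),
    U = {x | ∀ v : ℤ × ℤ, (fun p : F => x (v + (p : ℤ × ℤ))) ∈ P}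

/-- `(i,j)` has horizontal length `m` in `L`. -/
def HasHorizLength (L : Finset (ℤ × ℤ)) (p : ℤ × ℤ) (m : ℕ) : Prop :=
  1 ≤ m ∧ (∃ c : ℤ × ℤ, p ∈ Zrect m 1 c ∧ Zrect m 1 c ⊆ L) ∧
    ∀ m' : ℕ, m < m' → ¬ ∃ c : ℤ × ℤ, p ∈ Zrect m' 1 c ∧ Zrect m' 1 c ⊆ L

/-- `(i,j)` has vertical length `m` in `L`. -/
def HasVertLength (L : Finset (ℤ × ℤ)) (p : ℤ × ℤ) (m : ℕ) : Prop :=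
  1 ≤ m ∧ (∃ c : ℤ × ℤ, p ∈ Zrect 1 m c ∧ Zrect 1 m c ⊆ L) ∧
    ∀ m' : ℕ, m < m' → ¬ ∃ c : ℤ × ℤ, p ∈ Zrect 1 m' c ∧ Zrect 1 m' c ⊆ L

noncomputable def betaHoriz (m : ℕ) (L : Finset (ℤ × ℤ)) : ℕ :=
  (L.filter (fun p => HasHorizLength L p m)).card

noncomputable def betaVert (m : ℕ) (L : Finset (ℤ × ℤ)) : ℕ :=
  (L.filter (fun p => HasVertLength L p m)).card

/-- The one-dimensional sublattice segment `{s • v : 0 ≤ s ≤ n-1}`. -/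
def lineSegment (v : ℤ × ℤ) (n : ℕ) : Finset (ℤ × ℤ) :=
  (Finset.range n).image (fun s : ℕ => ((s : ℤ) * v.1, (s : ℤ) * v.2))

/-- The projectional entropy along the one-dimensional sublattice generated by `v`. -/
noncomputable def projEntropy {A : Type*} (U : Set ((ℤ × ℤ) → A)) (v : ℤ × ℤ) : ℝ :=
  ⨅ n : ℕ, (1 / (n + 1 : ℝ)) * Real.log (patternCount U (lineSegment v (n + 1)))

/-- `ĥ⁽¹⁾(U)`: supremum of projectional entropies over one-dimensional sublattices. -/
noncomputable def hHatOne {A : Type*} (U : Set ((ℤ × ℤ) → A)) : ℝ :=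
  ⨆ v : {w : ℤ × ℤ // w ≠ 0}, projEntropy U (v : ℤ × ℤ)

/-- The horizontal golden-mean shift. -/
def goldenMeanShift : Set ((ℤ × ℤ) → Fin 2) :=
  {x | ∀ p : ℤ × ℤ, x p * x (p.1 + 1, p.2) = 0}

/-- The sequence `a_k`: `a_1 = 2`, `a_2 = 3`, `a_k = a_{k-1} + a_{k-2}`. -/
def aSeq : ℕ → ℕ
  | 0 => 1
  | 1 => 2
  | (k + 2) => aSeq (k + 1) + aSeq k


section Geo

/-- membership in a rectangle -/
lemma mem_Zrect {k l : ℕ} {c p : ℤ × ℤ} :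
    p ∈ Zrect k l c ↔ c.1 ≤ p.1 ∧ p.1 < c.1 + k ∧ c.2 ≤ p.2 ∧ p.2 < c.2 + l := by
  obtain ⟨p1, p2⟩ := p
  simp only [Zrect, Finset.mem_image, Finset.mem_product, Finset.mem_range, Prod.mk.injEq]
  constructor
  · rintro ⟨⟨a, b⟩, ⟨ha, hb⟩, h1, h2⟩
    simp only at h1 h2
    omega
  · rintro ⟨h1, h2, h3, h4⟩
    refine ⟨((p1 - c.1).toNat, (p2 - c.2).toNat), ?_⟩
    dsimp only
    omega

lemma card_Zrect {k l : ℕ} {c : ℤ × ℤ} : (Zrect k l c).card = k * l := by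
  rw [Zrect, Finset.card_image_of_injOn, Finset.card_product, Finset.card_range,
    Finset.card_range]
  intro ⟨a, b⟩ _ ⟨a', b'⟩ _ h
  simp only [Prod.mk.injEq] at h ⊢
  omega

lemma Zrect_eq_image {k l : ℕ} {c : ℤ × ℤ} :
    Zrect k l c = (Zrect k l (0, 0)).image (· + c) := by
  ext ⟨p1, p2⟩
  simp only [Finset.mem_image, mem_Zrect]
  constructor
  · intro h
    refine ⟨(p1 - c.1, p2 - c.2), ?_, ?_⟩
    · dsimp only
      omega
    · simp only [Prod.ext_iff, Prod.fst_add, Prod.snd_add]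
      constructor <;> ring
  · rintro ⟨⟨q1, q2⟩, hq, heq⟩
    simp only [Prod.ext_iff, Prod.fst_add, Prod.snd_add] at heq
    simp only at hq
    omega

/-- the index of the grid cell containing a point -/
def cellIdx (k l : ℕ) (p : ℤ × ℤ) : ℤ × ℤ := (p.1 / (k:ℤ), p.2 / (l:ℤ))

/-- the grid cell with index `ab` -/
def cell (k l : ℕ) (ab : ℤ × ℤ) : Finset (ℤ × ℤ) :=
  Zrect k l ((k : ℤ) * ab.1, (l : ℤ) * ab.2)

lemma mem_cell_cellIdx {k l : ℕ} (hk : 0 < k) (hl : 0 < l) (p : ℤ × ℤ) :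
    p ∈ cell k l (cellIdx k l p) := by
  have h1 := Int.mul_ediv_add_emod p.1 k
  have h2 := Int.mul_ediv_add_emod p.2 l
  have e1 : 0 ≤ p.1 % (k : ℤ) := Int.emod_nonneg _ (by exact_mod_cast hk.ne')
  have e2 : 0 ≤ p.2 % (l : ℤ) := Int.emod_nonneg _ (by exact_mod_cast hl.ne')
  have f1 : p.1 % (k : ℤ) < k := Int.emod_lt_of_pos _ (by exact_mod_cast hk)
  have f2 : p.2 % (l : ℤ) < l := Int.emod_lt_of_pos _ (by exact_mod_cast hl)
  simp only [cell, cellIdx, mem_Zrect]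
  omega

lemma int_block_unique {k a a' x : ℤ} (hk : 0 < k) (h1 : k * a ≤ x) (h2 : x < k * a + k)
    (h3 : k * a' ≤ x) (h4 : x < k * a' + k) : a = a' := by
  rcases lt_trichotomy a a' with h | h | h
  · have : k * (a + 1) ≤ k * a' := by
      exact mul_le_mul_of_nonneg_left (by omega) hk.le
    nlinarith
  · exact h
  · have : k * (a' + 1) ≤ k * a := mul_le_mul_of_nonneg_left (by omega) hk.le
    nlinarith

lemma cellIdx_eq_of_mem {k l : ℕ} (hk : 0 < k) (hl : 0 < l) {p ab : ℤ × ℤ}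
    (h : p ∈ cell k l ab) : ab = cellIdx k l p := by
  have h' := mem_cell_cellIdx hk hl p
  simp only [cell, mem_Zrect] at h h'
  have hk' : (0 : ℤ) < k := by exact_mod_cast hk
  have hl' : (0 : ℤ) < l := by exact_mod_cast hl
  have e1 : ab.1 = (cellIdx k l p).1 :=
    int_block_unique hk' h.1 h.2.1 h'.1 h'.2.1
  have e2 : ab.2 = (cellIdx k l p).2 :=
    int_block_unique hl' h.2.2.1 h.2.2.2 h'.2.2.1 h'.2.2.2
  exact Prod.ext e1 e2

end Geo
section Pat

variable {A : Type*} [Fintype A] {U : Set ((ℤ × ℤ) → A)} {L S T : Finset (ℤ × ℤ)}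

lemma patternImage_finite (U : Set ((ℤ × ℤ) → A)) (L : Finset (ℤ × ℤ)) :
    ((fun x => fun p : L => x (p : ℤ × ℤ)) '' U).Finite :=
  Set.Finite.subset (Set.finite_univ) (Set.subset_univ _)

lemma one_le_patternCount (hne : U.Nonempty) : 1 ≤ patternCount U L := by
  have h : ((fun x => fun p : L => x (p : ℤ × ℤ)) '' U).Nonempty :=
    hne.image (fun x => fun p : L => x (p : ℤ × ℤ))
  exact (Set.ncard_pos (patternImage_finite U L)).2 h

lemma patternCount_le_pow : patternCount U L ≤ (Fintype.card A) ^ L.card := by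
  have h := Set.ncard_le_ncard
    (s := ((fun x => fun p : L => x (p : ℤ × ℤ)) '' U)) (Set.subset_univ _)
    (Set.finite_univ (α := (L → A)))
  calc patternCount U L ≤ (Set.univ : Set (L → A)).ncard := h
    _ = Fintype.card (L → A) := by rw [Set.ncard_univ, Nat.card_eq_fintype_card]
    _ = (Fintype.card A) ^ L.card := by rw [Fintype.card_fun, Fintype.card_coe]

lemma patternCount_mono (h : S ⊆ T) : patternCount U S ≤ patternCount U T := by
  have key : ((fun x => fun p : S => x (p : ℤ × ℤ)) '' U)
      = (fun (y : T → A) => fun p : S => y ⟨(p : ℤ × ℤ), h p.2⟩) ''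
        ((fun x => fun p : T => x (p : ℤ × ℤ)) '' U) := by
    rw [← Set.image_comp]; rfl
  rw [patternCount, key]
  exact Set.ncard_image_le (patternImage_finite U T)

lemma ncard_prod {α β : Type*} (s : Set α) (t : Set β) :
    (s ×ˢ t).ncard = s.ncard * t.ncard := by
  rw [← Nat.card_coe_set_eq, ← Nat.card_coe_set_eq, ← Nat.card_coe_set_eq,
    ← Nat.card_prod]
  exact Nat.card_congr (Equiv.Set.prod s t)

lemma patternCount_union_le : patternCount U (S ∪ T) ≤ patternCount U S * patternCount U T := by
  classical
  set φ : ((S ∪ T : Finset (ℤ × ℤ)) → A) → ((S → A) × (T → A)) :=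
    fun y => (fun p => y ⟨(p : ℤ × ℤ), Finset.mem_union_left _ p.2⟩,
              fun p => y ⟨(p : ℤ × ℤ), Finset.mem_union_right _ p.2⟩) with hφ
  have hinj : Function.Injective φ := by
    intro y y' h
    funext ⟨p, hp⟩
    simp only [hφ, Prod.mk.injEq] at h
    rcases Finset.mem_union.1 hp with hs | ht
    · exact congrFun h.1 ⟨p, hs⟩
    · exact congrFun h.2 ⟨p, ht⟩
  have hsub : φ '' ((fun x => fun p : (S ∪ T : Finset (ℤ × ℤ)) => x (p : ℤ × ℤ)) '' U)
      ⊆ ((fun x => fun p : S => x (p : ℤ × ℤ)) '' U) ×ˢ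
        ((fun x => fun p : T => x (p : ℤ × ℤ)) '' U) := by
    rintro _ ⟨_, ⟨x, hx, rfl⟩, rfl⟩
    exact ⟨⟨x, hx, rfl⟩, ⟨x, hx, rfl⟩⟩
  calc patternCount U (S ∪ T)
      = (φ '' ((fun x => fun p : (S ∪ T : Finset (ℤ × ℤ)) => x (p : ℤ × ℤ)) '' U)).ncard :=
        (Set.ncard_image_of_injective _ hinj).symm
    _ ≤ (((fun x => fun p : S => x (p : ℤ × ℤ)) '' U) ×ˢ
        ((fun x => fun p : T => x (p : ℤ × ℤ)) '' U)).ncard :=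
        Set.ncard_le_ncard hsub (Set.Finite.prod (patternImage_finite U S)
          (patternImage_finite U T))
    _ = patternCount U S * patternCount U T := ncard_prod _ _

lemma patternCount_translate (hU : ∀ v : ℤ × ℤ, ∀ x ∈ U, (fun p => x (p + v)) ∈ U)
    (v : ℤ × ℤ) : patternCount U (L.image (· + v)) = patternCount U L := by
  classical
  set G : ((L.image (· + v) : Finset (ℤ × ℤ)) → A) → (L → A) :=
    fun y => fun p => y ⟨(p : ℤ × ℤ) + v, Finset.mem_image_of_mem _ p.2⟩ with hG
  have hinj : Function.Injective G := by
    intro y y' h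
    funext ⟨q, hq⟩
    obtain ⟨p, hp, rfl⟩ := Finset.mem_image.1 hq
    exact congrFun h ⟨p, hp⟩
  have key : ((fun x => fun p : L => x (p : ℤ × ℤ)) '' U)
      = G '' ((fun x => fun p : (L.image (· + v) : Finset (ℤ × ℤ)) => x (p : ℤ × ℤ)) '' U) := by
    ext y
    constructor
    · rintro ⟨x, hx, rfl⟩
      refine ⟨_, ⟨(fun p => x (p + -v)), hU (-v) x hx, rfl⟩, ?_⟩
      funext p
      simp [hG]
    · rintro ⟨_, ⟨x, hx, rfl⟩, rfl⟩
      exact ⟨(fun p => x (p + v)), hU v x hx, rfl⟩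
  symm
  unfold patternCount
  rw [key, Set.ncard_image_of_injective _ hinj]

lemma patternCount_biUnion_le (hne : U.Nonempty) (I : Finset (ℤ × ℤ))
    (f : ℤ × ℤ → Finset (ℤ × ℤ)) (C : ℕ)
    (hC : ∀ ab ∈ I, patternCount U (f ab) ≤ C) :
    patternCount U (I.biUnion f) ≤ C ^ I.card := by
  classical
  induction I using Finset.induction_on with
  | empty =>
    simpa using patternCount_le_pow (U := U) (L := (∅ : Finset (ℤ × ℤ)))
  | @insert a s hnotmem ih =>
    rw [Finset.biUnion_insert, Finset.card_insert_of_notMem hnotmem, pow_succ]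
    calc patternCount U (f a ∪ s.biUnion f)
        ≤ patternCount U (f a) * patternCount U (s.biUnion f) := patternCount_union_le
      _ ≤ C * C ^ s.card := Nat.mul_le_mul (hC a (Finset.mem_insert_self a s))
          (ih fun ab hab => hC ab (Finset.mem_insert_of_mem hab))
      _ = C ^ s.card * C := Nat.mul_comm _ _

end Pat
section Comb

/-- From a point inside and a point outside `L`, both in a rectangle, get a mixed
adjacent pair inside the rectangle. -/
lemma exists_mixed_aux (L : Finset (ℤ × ℤ)) (k l : ℕ) (c : ℤ × ℤ) :
    ∀ N : ℕ, ∀ p q : ℤ × ℤ, (p.1 - q.1).natAbs + (p.2 - q.2).natAbs ≤ N →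
    p ∈ Zrect k l c → q ∈ Zrect k l c → p ∈ L → q ∉ L →
    ∃ u e : ℤ × ℤ, (e = (1, 0) ∨ e = (0, 1)) ∧ u ∈ Zrect k l c ∧ u + e ∈ Zrect k l c ∧
      ((u ∈ L ∧ u + e ∉ L) ∨ (u ∉ L ∧ u + e ∈ L)) := by
  intro N
  induction N with
  | zero =>
    intro p q hm _ _ hp hq
    have : p = q := by
      obtain ⟨p1, p2⟩ := p; obtain ⟨q1, q2⟩ := q
      simp only [Prod.ext_iff]
      constructor <;> omega
    exact absurd (this ▸ hp) hq
  | succ N ih =>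
    intro p q hm hpZ hqZ hp hq
    rcases eq_or_ne p q with rfl | hne
    · exact absurd hp hq
    have hZp := mem_Zrect.1 hpZ
    have hZq := mem_Zrect.1 hqZ
    rcases lt_trichotomy q.1 p.1 with h1 | h1 | h1
    · -- move q right
      set r : ℤ × ℤ := (q.1 + 1, q.2) with hr
      have hrZ : r ∈ Zrect k l c := mem_Zrect.2 (by simp only [hr]; omega)
      have hqr : q + ((1 : ℤ), (0 : ℤ)) = r := by simp [hr, Prod.ext_iff]
      by_cases hrL : r ∈ L
      · exact ⟨q, (1, 0), Or.inl rfl, hqZ, hqr ▸ hrZ, Or.inr ⟨hq, hqr ▸ hrL⟩⟩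
      · exact ih p r (by simp only [hr]; omega) hpZ hrZ hp hrL
    · rcases lt_trichotomy q.2 p.2 with h2 | h2 | h2
      · set r : ℤ × ℤ := (q.1, q.2 + 1) with hr
        have hrZ : r ∈ Zrect k l c := mem_Zrect.2 (by simp only [hr]; omega)
        have hqr : q + ((0 : ℤ), (1 : ℤ)) = r := by simp [hr, Prod.ext_iff]
        by_cases hrL : r ∈ L
        · exact ⟨q, (0, 1), Or.inr rfl, hqZ, hqr ▸ hrZ, Or.inr ⟨hq, hqr ▸ hrL⟩⟩
        · exact ih p r (by simp only [hr]; omega) hpZ hrZ hp hrL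
      · exact absurd (Prod.ext h1.symm h2.symm) hne
      · set r : ℤ × ℤ := (q.1, q.2 - 1) with hr
        have hrZ : r ∈ Zrect k l c := mem_Zrect.2 (by simp only [hr]; omega)
        have hqr : r + ((0 : ℤ), (1 : ℤ)) = q := by simp [hr, Prod.ext_iff]
        by_cases hrL : r ∈ L
        · exact ⟨r, (0, 1), Or.inr rfl, hrZ, hqr ▸ hqZ, Or.inl ⟨hrL, hqr ▸ hq⟩⟩
        · exact ih p r (by simp only [hr]; omega) hpZ hrZ hp hrL
    · set r : ℤ × ℤ := (q.1 - 1, q.2) with hr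
      have hrZ : r ∈ Zrect k l c := mem_Zrect.2 (by simp only [hr]; omega)
      have hqr : r + ((1 : ℤ), (0 : ℤ)) = q := by simp [hr, Prod.ext_iff]
      by_cases hrL : r ∈ L
      · exact ⟨r, (1, 0), Or.inl rfl, hrZ, hqr ▸ hqZ, Or.inl ⟨hrL, hqr ▸ hq⟩⟩
      · exact ih p r (by simp only [hr]; omega) hpZ hrZ hp hrL

lemma exists_mixed {L : Finset (ℤ × ℤ)} {k l : ℕ} {c p q : ℤ × ℤ}
    (hpZ : p ∈ Zrect k l c) (hqZ : q ∈ Zrect k l c) (hp : p ∈ L) (hq : q ∉ L) :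
    ∃ u e : ℤ × ℤ, (e = (1, 0) ∨ e = (0, 1)) ∧ u ∈ Zrect k l c ∧ u + e ∈ Zrect k l c ∧
      ((u ∈ L ∧ u + e ∉ L) ∨ (u ∉ L ∧ u + e ∈ L)) :=
  exists_mixed_aux L k l c _ p q le_rfl hpZ hqZ hp hq

/-- Top of the vertical run of `L` containing `v`. -/
lemma exists_run_top (L : Finset (ℤ × ℤ)) {v : ℤ × ℤ} (hv : v ∈ L) :
    ∃ b : ℤ × ℤ, b.1 = v.1 ∧ v.2 ≤ b.2 ∧ (∀ j, v.2 ≤ j → j ≤ b.2 → (v.1, j) ∈ L) ∧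
      (b.1, b.2 + 1) ∉ L := by
  have hex : ∃ n : ℕ, (v.1, v.2 + (n : ℤ) + 1) ∉ L := by
    by_contra hcon
    push_neg at hcon
    have : (↑L : Set (ℤ × ℤ)).Infinite :=
      Set.infinite_of_injective_forall_mem
        (f := fun n : ℕ => (v.1, v.2 + (n : ℤ) + 1))
        (fun a b hab => by simpa [Prod.ext_iff] using hab) (fun n => hcon n)
    exact this L.finite_toSet
  refine ⟨(v.1, v.2 + (Nat.find hex : ℤ)), rfl, by simp, ?_, by simpa using Nat.find_spec hex⟩
  intro j h1 h2
  rcases eq_or_lt_of_le h1 with rfl | hlt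
  · exact hv
  · have hj : j = v.2 + ((j - v.2 - 1).toNat : ℤ) + 1 := by omega
    have hlt' : (j - v.2 - 1).toNat < Nat.find hex := by
      simp only at h2; omega
    have := Nat.find_min hex hlt'
    rw [not_not] at this
    rw [hj]
    exact this

/-- Right end of the horizontal run of `L` containing `v`. -/
lemma exists_run_right (L : Finset (ℤ × ℤ)) {v : ℤ × ℤ} (hv : v ∈ L) :
    ∃ b : ℤ × ℤ, b.2 = v.2 ∧ v.1 ≤ b.1 ∧ (∀ i, v.1 ≤ i → i ≤ b.1 → (i, v.2) ∈ L) ∧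
      (b.1 + 1, b.2) ∉ L := by
  have hex : ∃ n : ℕ, (v.1 + (n : ℤ) + 1, v.2) ∉ L := by
    by_contra hcon
    push_neg at hcon
    have : (↑L : Set (ℤ × ℤ)).Infinite :=
      Set.infinite_of_injective_forall_mem
        (f := fun n : ℕ => (v.1 + (n : ℤ) + 1, v.2))
        (fun a b hab => by simpa [Prod.ext_iff] using hab) (fun n => hcon n)
    exact this L.finite_toSet
  refine ⟨(v.1 + (Nat.find hex : ℤ), v.2), rfl, by simp, ?_, by simpa using Nat.find_spec hex⟩
  intro i h1 h2
  rcases eq_or_lt_of_le h1 with rfl | hlt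
  · exact hv
  · have hi : i = v.1 + ((i - v.1 - 1).toNat : ℤ) + 1 := by omega
    have hlt' : (i - v.1 - 1).toNat < Nat.find hex := by
      simp only at h2; omega
    have := Nat.find_min hex hlt'
    rw [not_not] at this
    rw [hi]
    exact this

lemma add10 (u : ℤ × ℤ) : u + ((1 : ℤ), (0 : ℤ)) = (u.1 + 1, u.2) := by
  simp [Prod.ext_iff]

lemma add01 (u : ℤ × ℤ) : u + ((0 : ℤ), (1 : ℤ)) = (u.1, u.2 + 1) := by
  simp [Prod.ext_iff]

/-- The tagging predicate used to injectively map bad cells to boundary points. -/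
def TagP (k l : ℕ) (L : Finset (ℤ × ℤ)) (ab : ℤ × ℤ) (bt : (ℤ × ℤ) × Fin 3) : Prop :=
  bt.1 ∈ latBoundary L ∧
  ((bt.2 = 0 ∧ bt.1 ∈ cell k l ab) ∨
   (bt.2 = 1 ∧ ∃ v : ℤ × ℤ, v ∈ cell k l ab ∧ v.1 = bt.1.1 ∧ v.2 ≤ bt.1.2 ∧
      (∀ j, v.2 ≤ j → j ≤ bt.1.2 → (v.1, j) ∈ L) ∧ (v.1, v.2 - 1) ∉ L) ∨
   (bt.2 = 2 ∧ ∃ v : ℤ × ℤ, v ∈ cell k l ab ∧ v.2 = bt.1.2 ∧ v.1 ≤ bt.1.1 ∧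
      (∀ i, v.1 ≤ i → i ≤ bt.1.1 → (i, v.2) ∈ L) ∧ (v.1 - 1, v.2) ∉ L))

lemma mem_latBoundary_of_right {L : Finset (ℤ × ℤ)} {b : ℤ × ℤ} (hb : b ∈ L)
    (h : (b.1 + 1, b.2) ∉ L) : b ∈ latBoundary L := by
  simp only [latBoundary, Finset.mem_sdiff, latInterior, Finset.mem_filter]
  exact ⟨hb, fun h' => h h'.2.1⟩

lemma mem_latBoundary_of_up {L : Finset (ℤ × ℤ)} {b : ℤ × ℤ} (hb : b ∈ L)
    (h : (b.1, b.2 + 1) ∉ L) : b ∈ latBoundary L := by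
  simp only [latBoundary, Finset.mem_sdiff, latInterior, Finset.mem_filter]
  exact ⟨hb, fun h' => h h'.2.2.1⟩

/-- Existence of a tag for every bad cell. -/
lemma exists_tag {k l : ℕ} {L : Finset (ℤ × ℤ)} {ab p q : ℤ × ℤ}
    (hp : p ∈ cell k l ab) (hq : q ∈ cell k l ab) (hpL : p ∈ L) (hqL : q ∉ L) :
    ∃ bt : (ℤ × ℤ) × Fin 3, TagP k l L ab bt := by
  obtain ⟨u, e, he, huZ, hueZ, hcase⟩ := exists_mixed hp hq hpL hqL
  rcases hcase with ⟨huL, hueL⟩ | ⟨huL, hueL⟩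
  · refine ⟨(u, 0), ?_, Or.inl ⟨rfl, huZ⟩⟩
    rcases he with rfl | rfl
    · rw [add10] at hueL
      exact mem_latBoundary_of_right huL hueL
    · rw [add01] at hueL
      exact mem_latBoundary_of_up huL hueL
  · rcases he with rfl | rfl
    · -- horizontal: v := u + (1,0) = (u.1+1, u.2)
      rw [add10] at hueZ hueL
      obtain ⟨b, hb2, hb1, hseg, hbr⟩ := exists_run_right L hueL
      have hbL : b ∈ L := by
        have : (b.1, b.2) ∈ L := by
          rw [hb2]
          exact hseg b.1 hb1 le_rfl
        simpa using this
      refine ⟨(b, 2), mem_latBoundary_of_right hbL hbr,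
        Or.inr (Or.inr ⟨rfl, (u.1 + 1, u.2), hueZ, hb2.symm, hb1, ?_, ?_⟩)⟩
      · intro i hi1 hi2
        exact hseg i hi1 hi2
      · simpa using huL
    · -- vertical: v := u + (0,1) = (u.1, u.2+1)
      rw [add01] at hueZ hueL
      obtain ⟨b, hb1, hb2, hseg, hbu⟩ := exists_run_top L hueL
      have hbL : b ∈ L := by
        have : (b.1, b.2) ∈ L := by
          rw [hb1]
          exact hseg b.2 hb2 le_rfl
        simpa using this
      refine ⟨(b, 1), mem_latBoundary_of_up hbL hbu,
        Or.inr (Or.inl ⟨rfl, (u.1, u.2 + 1), hueZ, hb1.symm, hb2, ?_, ?_⟩)⟩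
      · intro j hj1 hj2
        exact hseg j hj1 hj2
      · simpa using huL

end Comb
section Count

/-- Uniqueness of the tagged boundary point's source cell. -/
lemma tag_inj {k l : ℕ} (hk : 0 < k) (hl : 0 < l) {L : Finset (ℤ × ℤ)}
    {ab ab' : ℤ × ℤ} {bt : (ℤ × ℤ) × Fin 3}
    (h : TagP k l L ab bt) (h' : TagP k l L ab' bt) : ab = ab' := by
  obtain ⟨b, t⟩ := bt
  obtain ⟨-, hcase⟩ := h
  obtain ⟨-, hcase'⟩ := h'
  have cellEq : ∀ {v : ℤ × ℤ} {c c' : ℤ × ℤ}, v ∈ cell k l c → v ∈ cell k l c' → c = c' := by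
    intro v c c' h1 h2
    rw [cellIdx_eq_of_mem hk hl h1, cellIdx_eq_of_mem hk hl h2]
  rcases hcase with ⟨ht, hb⟩ | ⟨ht, v, hv, hv1, hv2, hseg, hgap⟩ | ⟨ht, v, hv, hv1, hv2, hseg, hgap⟩ <;>
    rcases hcase' with ⟨ht', hb'⟩ | ⟨ht', v', hv', hv1', hv2', hseg', hgap'⟩ |
      ⟨ht', v', hv', hv1', hv2', hseg', hgap'⟩ <;>
    first
      | (exact absurd (ht ▸ ht') (by decide))
      | skip
  · exact cellEq hb hb'
  · -- both tag 1 : vertical runs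
    have hvv : v = v' := by
      have hcol : v.1 = v'.1 := by rw [hv1, hv1']
      rcases lt_trichotomy v.2 v'.2 with hlt | heq | hlt
      · exfalso
        have hmem := hseg (v'.2 - 1) (by omega) (by omega)
        rw [hcol] at hmem
        exact hgap' hmem
      · exact Prod.ext hcol heq
      · exfalso
        have hmem := hseg' (v.2 - 1) (by omega) (by omega)
        rw [← hcol] at hmem
        exact hgap hmem
    exact cellEq hv (hvv ▸ hv')
  · -- both tag 2 : horizontal runs
    have hvv : v = v' := by
      have hrow : v.2 = v'.2 := by rw [hv1, hv1']
      rcases lt_trichotomy v.1 v'.1 with hlt | heq | hlt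
      · exfalso
        have hmem := hseg (v'.1 - 1) (by omega) (by omega)
        rw [hrow] at hmem
        exact hgap' hmem
      · exact Prod.ext heq hrow
      · exfalso
        have hmem := hseg' (v.1 - 1) (by omega) (by omega)
        rw [← hrow] at hmem
        exact hgap hmem
    exact cellEq hv (hvv ▸ hv')

/-- The set of indices of bad cells. -/
noncomputable def badIdx (k l : ℕ) (L : Finset (ℤ × ℤ)) : Finset (ℤ × ℤ) :=
  (L.image (cellIdx k l)).filter (fun ab => ¬ cell k l ab ⊆ L)

lemma badIdx_card_le {k l : ℕ} (hk : 0 < k) (hl : 0 < l) (L : Finset (ℤ × ℤ)) :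
    (badIdx k l L).card ≤ 3 * (latBoundary L).card := by
  classical
  have hmain : (badIdx k l L).card ≤ ((latBoundary L) ×ˢ (Finset.univ : Finset (Fin 3))).card := by
    apply Finset.card_le_card_of_injOn
      (fun ab => if h : ∃ bt : (ℤ × ℤ) × Fin 3, TagP k l L ab bt then h.choose
        else ((0, 0), 0))
    · intro ab hab
      simp only [badIdx, Finset.mem_filter, Finset.mem_image, Finset.mem_coe] at hab
      obtain ⟨⟨p, hpL, hpidx⟩, hnsub⟩ := hab
      obtain ⟨q, hqZ, hqL⟩ := Finset.not_subset.1 hnsub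
      have hpZ : p ∈ cell k l ab := hpidx ▸ mem_cell_cellIdx hk hl p
      have hex : ∃ bt : (ℤ × ℤ) × Fin 3, TagP k l L ab bt := exists_tag hpZ hqZ hpL hqL
      simp only [dif_pos hex]
      have := hex.choose_spec
      exact Finset.mem_product.2 ⟨this.1, Finset.mem_univ _⟩
    · intro ab hab ab' hab' heq
      simp only [badIdx, Finset.mem_filter, Finset.mem_image, Finset.mem_coe] at hab hab'
      obtain ⟨⟨p, hpL, hpidx⟩, hnsub⟩ := hab
      obtain ⟨q, hqZ, hqL⟩ := Finset.not_subset.1 hnsub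
      obtain ⟨⟨p', hpL', hpidx'⟩, hnsub'⟩ := hab'
      obtain ⟨q', hqZ', hqL'⟩ := Finset.not_subset.1 hnsub'
      have hex : ∃ bt : (ℤ × ℤ) × Fin 3, TagP k l L ab bt :=
        exists_tag (hpidx ▸ mem_cell_cellIdx hk hl p) hqZ hpL hqL
      have hex' : ∃ bt : (ℤ × ℤ) × Fin 3, TagP k l L ab' bt :=
        exists_tag (hpidx' ▸ mem_cell_cellIdx hk hl p') hqZ' hpL' hqL'
      simp only [dif_pos hex, dif_pos hex'] at heq
      exact tag_inj hk hl hex.choose_spec (heq ▸ hex'.choose_spec)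
  calc (badIdx k l L).card ≤ _ := hmain
    _ = 3 * (latBoundary L).card := by
      rw [Finset.card_product]
      simp [Nat.mul_comm]

/-- Points outside the grid part lie in bad cells. -/
lemma sdiff_gridPart_subset {k l : ℕ} (hk : 0 < k) (hl : 0 < l) (L : Finset (ℤ × ℤ)) :
    L \ gridPart k l L ⊆ (badIdx k l L).biUnion (cell k l) := by
  intro p hp
  obtain ⟨hpL, hpg⟩ := Finset.mem_sdiff.1 hp
  have hpZ : p ∈ cell k l (cellIdx k l p) := mem_cell_cellIdx hk hl p
  have hnsub : ¬ cell k l (cellIdx k l p) ⊆ L := by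
    intro hsub
    apply hpg
    simp only [gridPart, Finset.mem_filter]
    exact ⟨hpL, (cellIdx k l p).1, (cellIdx k l p).2, hpZ, hsub⟩
  refine Finset.mem_biUnion.2 ⟨cellIdx k l p, ?_, hpZ⟩
  simp only [badIdx, Finset.mem_filter, Finset.mem_image]
  exact ⟨⟨p, hpL, rfl⟩, hnsub⟩

lemma beta_le {k l : ℕ} (hk : 0 < k) (hl : 0 < l) (L : Finset (ℤ × ℤ)) :
    (L \ gridPart k l L).card ≤ k * l * (3 * (latBoundary L).card) := by
  calc (L \ gridPart k l L).card
      ≤ ((badIdx k l L).biUnion (cell k l)).card :=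
        Finset.card_le_card (sdiff_gridPart_subset hk hl L)
    _ ≤ ∑ ab ∈ badIdx k l L, (cell k l ab).card := Finset.card_biUnion_le
    _ = ∑ _ab ∈ badIdx k l L, k * l := Finset.sum_congr rfl (fun ab _ => card_Zrect)
    _ = (badIdx k l L).card * (k * l) := by rw [Finset.sum_const, smul_eq_mul]
    _ ≤ 3 * (latBoundary L).card * (k * l) :=
        Nat.mul_le_mul_right _ (badIdx_card_le hk hl L)
    _ = k * l * (3 * (latBoundary L).card) := Nat.mul_comm _ _

/-- The set of indices of good (fully contained) cells. -/
noncomputable def goodIdx (k l : ℕ) (L : Finset (ℤ × ℤ)) : Finset (ℤ × ℤ) :=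
  (L.image (cellIdx k l)).filter (fun ab => cell k l ab ⊆ L)

lemma gridPart_eq_biUnion {k l : ℕ} (hk : 0 < k) (hl : 0 < l) (L : Finset (ℤ × ℤ)) :
    gridPart k l L = (goodIdx k l L).biUnion (cell k l) := by
  ext p
  simp only [gridPart, Finset.mem_filter, Finset.mem_biUnion, goodIdx, Finset.mem_image]
  constructor
  · rintro ⟨hpL, a, b, hpZ, hsub⟩
    refine ⟨(a, b), ⟨⟨p, hpL, (cellIdx_eq_of_mem hk hl hpZ).symm⟩, hsub⟩, hpZ⟩
  · rintro ⟨ab, ⟨-, hsub⟩, hpZ⟩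
    exact ⟨hsub hpZ, ab.1, ab.2, hpZ, hsub⟩

lemma goodIdx_card_mul_le {k l : ℕ} (hk : 0 < k) (hl : 0 < l) (L : Finset (ℤ × ℤ)) :
    (goodIdx k l L).card * (k * l) ≤ L.card := by
  have hdisj : ∀ ab ∈ goodIdx k l L, ∀ ab' ∈ goodIdx k l L, ab ≠ ab' →
      Disjoint (cell k l ab) (cell k l ab') := by
    intro ab _ ab' _ hne
    refine Finset.disjoint_left.2 fun p hp hp' => hne ?_
    rw [cellIdx_eq_of_mem hk hl hp, cellIdx_eq_of_mem hk hl hp']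
  have hcard : ((goodIdx k l L).biUnion (cell k l)).card
      = ∑ ab ∈ goodIdx k l L, (cell k l ab).card := Finset.card_biUnion hdisj
  have hsub : (goodIdx k l L).biUnion (cell k l) ⊆ L := by
    intro p hp
    obtain ⟨ab, hab, hpZ⟩ := Finset.mem_biUnion.1 hp
    exact (Finset.mem_filter.1 hab).2 hpZ
  calc (goodIdx k l L).card * (k * l)
      = ∑ _ab ∈ goodIdx k l L, k * l := by rw [Finset.sum_const, smul_eq_mul]
    _ = ∑ ab ∈ goodIdx k l L, (cell k l ab).card :=
        Finset.sum_congr rfl (fun ab _ => card_Zrect.symm)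
    _ = ((goodIdx k l L).biUnion (cell k l)).card := hcard.symm
    _ ≤ L.card := Finset.card_le_card hsub

/-- Main counting inequality. -/
lemma main_count {A : Type*} [Fintype A] {U : Set ((ℤ × ℤ) → A)} (hne : U.Nonempty)
    (hshift : ∀ v : ℤ × ℤ, ∀ x ∈ U, (fun p => x (p + v)) ∈ U)
    {k l : ℕ} (hk : 0 < k) (hl : 0 < l) (L : Finset (ℤ × ℤ)) :
    (goodIdx k l L).card * (k * l) ≤ L.card ∧
    patternCount U L ≤ (patternCount U (Zrect k l (0, 0))) ^ (goodIdx k l L).card *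
      (Fintype.card A) ^ (k * l * (3 * (latBoundary L).card)) := by
  refine ⟨goodIdx_card_mul_le hk hl L, ?_⟩
  have hcell : ∀ ab ∈ goodIdx k l L, patternCount U (cell k l ab)
      ≤ patternCount U (Zrect k l (0, 0)) := by
    intro ab _
    have : cell k l ab = (Zrect k l (0, 0)).image (· + ((k : ℤ) * ab.1, (l : ℤ) * ab.2)) :=
      Zrect_eq_image
    rw [cell] at this ⊢
    rw [this, patternCount_translate hshift]
  have hsubL : gridPart k l L ⊆ L := Finset.filter_subset _ _
  have hsplit : L = gridPart k l L ∪ (L \ gridPart k l L) :=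
    (Finset.union_sdiff_of_subset hsubL).symm
  calc patternCount U L
      = patternCount U (gridPart k l L ∪ (L \ gridPart k l L)) := by rw [← hsplit]
    _ ≤ patternCount U (gridPart k l L) * patternCount U (L \ gridPart k l L) :=
        patternCount_union_le
    _ ≤ (patternCount U (Zrect k l (0, 0))) ^ (goodIdx k l L).card *
        (Fintype.card A) ^ (k * l * (3 * (latBoundary L).card)) := by
      apply Nat.mul_le_mul
      · rw [gridPart_eq_biUnion hk hl]
        exact patternCount_biUnion_le hne _ _ _ hcell
      · calc patternCount U (L \ gridPart k l L)
            ≤ (Fintype.card A) ^ (L \ gridPart k l L).card := patternCount_le_pow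
          _ ≤ (Fintype.card A) ^ (k * l * (3 * (latBoundary L).card)) :=
            Nat.pow_le_pow_right (Fintype.card_pos_iff.2 ⟨hne.some (0, 0)⟩)
              (beta_le hk hl L)

end Count
section Final

lemma le_of_forall_pos_le_add' {a b : ℝ} (h : ∀ ε : ℝ, 0 < ε → a ≤ b + ε) : a ≤ b := by
  by_contra hc
  push_neg at hc
  have := h ((a - b) / 2) (by linarith)
  linarith

theorem entropyAlong_le_rectEntropy' {A : Type*} [Fintype A] [TopologicalSpace A]
    [DiscreteTopology A] (hcard : 2 ≤ Fintype.card A)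
    (U : Set ((ℤ × ℤ) → A)) (hU : IsShiftSpace U)
    (Ω : ℕ → Finset (ℤ × ℤ)) (hΩ : IsExpandingSystem Ω)
    (hbd : Filter.limsup
      (fun n => ((latBoundary (Ω n)).card : ℝ) / ((Ω n).card : ℝ)) Filter.atTop = 0) :
    entropyAlong U Ω ≤ rectEntropy U := by
  obtain ⟨hne, -, hshift⟩ := hU
  rw [rectEntropy]
  refine le_ciInf fun mn => ?_
  obtain ⟨m, n⟩ := mn
  set k := m + 1 with hkdef
  set l := n + 1 with hldef
  have hk : 0 < k := Nat.succ_pos m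
  have hl : 0 < l := Nat.succ_pos n
  set Γ₀ : ℕ := patternCount U (Zrect k l (0, 0)) with hΓ₀
  set N : ℕ := Fintype.card A with hN
  have hΓ₀1 : 1 ≤ Γ₀ := one_le_patternCount hne
  have hN1 : 1 ≤ N := le_trans (by norm_num) hcard
  have hlogΓ : 0 ≤ Real.log Γ₀ := Real.log_nonneg (by exact_mod_cast hΓ₀1)
  have hlogN : 0 ≤ Real.log N := Real.log_nonneg (by exact_mod_cast hN1)
  set C : ℝ := (1 / (((k * l : ℕ) : ℝ))) * Real.log Γ₀ with hCdef
  have hC0 : 0 ≤ C := by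
    apply mul_nonneg _ hlogΓ
    positivity
  set c : ℝ := 3 * ((k * l : ℕ) : ℝ) * Real.log N with hcdef
  have hc0 : 0 ≤ c := by positivity
  set f : ℕ → ℝ :=
    fun j => (1 / ((Ω j).card : ℝ)) * Real.log (patternCount U (Ω j)) with hfdef
  set r : ℕ → ℝ :=
    fun j => ((latBoundary (Ω j)).card : ℝ) / ((Ω j).card : ℝ) with hrdef
  have hf0 : ∀ j, 0 ≤ f j := by
    intro j
    apply mul_nonneg (by positivity)
    exact Real.log_nonneg (by exact_mod_cast one_le_patternCount (L := Ω j) hne)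
  have hr1 : ∀ j, r j ≤ 1 := by
    intro j
    apply div_le_one_of_le₀
    · exact_mod_cast Finset.card_le_card (Finset.sdiff_subset)
    · positivity
  -- pointwise bound
  have hpt : ∀ j, f j ≤ C + c * r j := by
    intro j
    obtain ⟨hg, hcount⟩ := main_count hne hshift hk hl (Ω j)
    set g : ℕ := (goodIdx k l (Ω j)).card with hgdef
    set Bn : ℕ := (latBoundary (Ω j)).card with hBdef
    rcases Nat.eq_zero_or_pos (Ω j).card with hc0' | hc0'
    · have : f j = 0 := by
        simp only [hfdef, hc0']
        norm_num
      rw [this]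
      have : 0 ≤ c * r j := mul_nonneg hc0 (by positivity)
      linarith
    · have hc0R : (0 : ℝ) < ((Ω j).card : ℝ) := by exact_mod_cast hc0'
      have hklR : (0 : ℝ) < ((k * l : ℕ) : ℝ) := by
        exact_mod_cast Nat.mul_pos hk hl
      have hlogP : Real.log (patternCount U (Ω j))
          ≤ g * Real.log Γ₀ + ((k * l * (3 * Bn) : ℕ) : ℝ) * Real.log N := by
        have h1 : ((patternCount U (Ω j) : ℕ) : ℝ)
            ≤ ((Γ₀ ^ g * N ^ (k * l * (3 * Bn)) : ℕ) : ℝ) := by exact_mod_cast hcount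
        have hPpos : (0 : ℝ) < ((patternCount U (Ω j) : ℕ) : ℝ) := by
          exact_mod_cast one_le_patternCount (L := Ω j) hne
        have h2 := Real.log_le_log hPpos h1
        rw [Nat.cast_mul, Real.log_mul (by positivity) (by positivity)] at h2
        rw [Nat.cast_pow, Nat.cast_pow, Real.log_pow, Real.log_pow] at h2
        calc Real.log (patternCount U (Ω j)) ≤ _ := h2
          _ = g * Real.log Γ₀ + ((k * l * (3 * Bn) : ℕ) : ℝ) * Real.log N := by
            push_cast
            ring
      have hgR : (g : ℝ) * ((k * l : ℕ) : ℝ) ≤ ((Ω j).card : ℝ) := by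
        exact_mod_cast hg
      have key1 : (1 / ((Ω j).card : ℝ)) * ((g : ℝ) * Real.log Γ₀) ≤ C := by
        rw [hCdef]
        rw [one_div, one_div, inv_mul_le_iff₀ hc0R]
        calc (g : ℝ) * Real.log Γ₀
            ≤ (((Ω j).card : ℝ) / ((k * l : ℕ) : ℝ)) * Real.log Γ₀ := by
              apply mul_le_mul_of_nonneg_right _ hlogΓ
              rw [le_div_iff₀ hklR]
              exact hgR
          _ = ((Ω j).card : ℝ) * (((k * l : ℕ) : ℝ)⁻¹ * Real.log Γ₀) := by ring
      have key2 : (1 / ((Ω j).card : ℝ)) * (((k * l * (3 * Bn) : ℕ) : ℝ) * Real.log N)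
          = c * r j := by
        rw [hcdef, hrdef, hBdef]
        push_cast
        ring
      calc f j = (1 / ((Ω j).card : ℝ)) * Real.log (patternCount U (Ω j)) := rfl
        _ ≤ (1 / ((Ω j).card : ℝ)) *
            ((g : ℝ) * Real.log Γ₀ + ((k * l * (3 * Bn) : ℕ) : ℝ) * Real.log N) := by
          apply mul_le_mul_of_nonneg_left hlogP (by positivity)
        _ = (1 / ((Ω j).card : ℝ)) * ((g : ℝ) * Real.log Γ₀)
            + (1 / ((Ω j).card : ℝ)) * (((k * l * (3 * Bn) : ℕ) : ℝ) * Real.log N) := by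
          ring
        _ ≤ C + c * r j := by
          rw [key2]
          exact add_le_add_left key1 _
  -- limsup step
  have hcobdd : Filter.IsCoboundedUnder (· ≤ ·) Filter.atTop f :=
    Filter.IsCoboundedUnder.of_frequently_ge
      ((Filter.Eventually.of_forall hf0).frequently)
  have hbddr : Filter.IsBoundedUnder (· ≤ ·) Filter.atTop r :=
    ⟨1, Filter.eventually_map.2 (Filter.Eventually.of_forall hr1)⟩
  have hfin : entropyAlong U Ω ≤ C := by
    apply le_of_forall_pos_le_add'
    intro ε hε
    have hlim : Filter.limsup r Filter.atTop < ε / (c + 1) := by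
      rw [hrdef, hbd]
      positivity
    have hev : ∀ᶠ j in Filter.atTop, r j < ε / (c + 1) :=
      Filter.eventually_lt_of_limsup_lt hlim hbddr
    have hev2 : ∀ᶠ j in Filter.atTop, f j ≤ C + ε := by
      filter_upwards [hev] with j hj
      have h1 : c * r j ≤ c * (ε / (c + 1)) :=
        mul_le_mul_of_nonneg_left hj.le hc0
      have h2 : c * (ε / (c + 1)) ≤ ε := by
        rw [mul_div_assoc']
        rw [div_le_iff₀ (by linarith)]
        nlinarith
      have := hpt j
      linarith
    exact Filter.limsup_le_of_le hcobdd hev2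
  exact hfin

end Final

/-- Theorem 1.1, first part: if `limsup |∂Ω(n)|/|Ω(n)| = 0`
then `h_Ω(U) ≤ h_r(U)`. -/
theorem entropyAlong_le_rectEntropy {A : Type*} [Fintype A] [TopologicalSpace A]
    [DiscreteTopology A] (hcard : 2 ≤ Fintype.card A)
    (U : Set ((ℤ × ℤ) → A)) (hU : IsShiftSpace U)
    (Ω : ℕ → Finset (ℤ × ℤ)) (hΩ : IsExpandingSystem Ω)
    (hbd : Filter.limsup
      (fun n => ((latBoundary (Ω n)).card : ℝ) / ((Ω n).card : ℝ)) Filter.atTop = 0) :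
    entropyAlong U Ω ≤ rectEntropy U := by
  exact entropyAlong_le_rectEntropy' hcard U hU Ω hΩ hbd
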